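/- Let Act be a finite set with |Act| ≥ 2 and for each α ∈ Act let E_α be a trace-preserving super-operator on d×d complex matrices. Let E = (1/|Act|) Σ_{α∈Act} E_α, let P be a projection, and let σ₀ be a density matrix. Then the following are equivalent: (i) for every k ≥ 0 and every word α₁⋯α_k ∈ Act^k, supp(E_{α_k} ∘ ⋯ ∘ E_{α_1}(σ₀)) ⊆ range(P); (ii) supp(E^k(σ₀)) ⊆ range(P) for every 0 ≤ k ≤ d − 1. -/

import Mathlib

open Matrix ComplexOrder

/-- The super-operator with Kraus operators `(E_i)`: `ρ ↦ Σ_i E_i ρ E_iᴴ`. -/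
noncomputable def superOp {d : ℕ} {I : Type} [Fintype I]
    (E : I → Matrix (Fin d) (Fin d) ℂ) (ρ : Matrix (Fin d) (Fin d) ℂ) :
    Matrix (Fin d) (Fin d) ℂ :=
  ∑ i, E i * ρ * (E i)ᴴ

open scoped MatrixOrder in
lemma psd_exists_conjT {d : ℕ} {A : Matrix (Fin d) (Fin d) ℂ} (hA : A.PosSemidef) :
    ∃ B : Matrix (Fin d) (Fin d) ℂ, A = Bᴴ * B :=
  CStarAlgebra.nonneg_iff_eq_star_mul_self.mp hA.nonneg

section AuxLemmas

variable {d : ℕ}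

lemma mulVecLin_inj {A B : Matrix (Fin d) (Fin d) ℂ}
    (h : A.mulVecLin = B.mulVecLin) : A = B := by
  apply Matrix.toLin'.injective
  rw [Matrix.toLin'_apply', Matrix.toLin'_apply', h]

lemma psd_trace_nonneg {A : Matrix (Fin d) (Fin d) ℂ} (hA : A.PosSemidef) :
    0 ≤ A.trace := by
  rw [Matrix.trace]
  apply Finset.sum_nonneg
  intro i _
  have := hA.dotProduct_mulVec_nonneg (Pi.single i 1)
  simpa [dotProduct, Matrix.mulVec, Pi.single_apply, Matrix.diag] using this

lemma psd_trace_eq_zero {A : Matrix (Fin d) (Fin d) ℂ} (hA : A.PosSemidef)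
    (h : A.trace = 0) : A = 0 := by
  obtain ⟨B, rfl⟩ := psd_exists_conjT hA
  have hdiag : ∀ j, (Bᴴ * B) j j = star (fun i => B i j) ⬝ᵥ (fun i => B i j) := by
    intro j
    simp [Matrix.mul_apply, dotProduct, Matrix.conjTranspose_apply]
  have hzero : ∀ j ∈ Finset.univ, (Bᴴ * B) j j = 0 := by
    rw [Matrix.trace] at h
    refine (Finset.sum_eq_zero_iff_of_nonneg ?_).mp h
    intro j _
    rw [hdiag]
    exact dotProduct_star_self_nonneg _
  have hB : B = 0 := by
    ext i j
    have := hzero j (Finset.mem_univ j)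
    rw [hdiag] at this
    have := dotProduct_star_self_eq_zero.mp this
    exact congrFun this i
  simp [hB]

lemma trace_mul_psd_nonneg {A B : Matrix (Fin d) (Fin d) ℂ}
    (hA : A.PosSemidef) (hB : B.PosSemidef) : 0 ≤ (A * B).trace := by
  obtain ⟨C, rfl⟩ := psd_exists_conjT hB
  have h1 : A * (Cᴴ * C) = (A * Cᴴ) * C := by rw [Matrix.mul_assoc]
  rw [h1, Matrix.trace_mul_comm]
  have h2 : C * (A * Cᴴ) = C * A * Cᴴ := by rw [Matrix.mul_assoc]
  rw [h2]
  refine psd_trace_nonneg (hA.mul_mul_conjTranspose_same C)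

lemma exists_matrix_factor {A M : Matrix (Fin d) (Fin d) ℂ}
    (h : LinearMap.ker M.mulVecLin ≤ LinearMap.ker A.mulVecLin) :
    ∃ X : Matrix (Fin d) (Fin d) ℂ, A = X * M := by
  classical
  set g := M.mulVecLin with hg
  obtain ⟨q, hq⟩ := Submodule.exists_isCompl (LinearMap.range g)
  obtain ⟨s, hs⟩ := g.rangeRestrict.exists_rightInverse_of_surjective
    (LinearMap.range_eq_top.mpr g.surjective_rangeRestrict)
  set π : (Fin d → ℂ) →ₗ[ℂ] LinearMap.range g :=
    Submodule.linearProjOfIsCompl _ q hq with hπ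
  set L : (Fin d → ℂ) →ₗ[ℂ] (Fin d → ℂ) :=
    A.mulVecLin ∘ₗ s ∘ₗ π with hL
  have hLg : ∀ x, L (g x) = A.mulVecLin x := by
    intro x
    have hmem : g x ∈ LinearMap.range g := ⟨x, rfl⟩
    have hπg : π (g x) = ⟨g x, hmem⟩ :=
      Submodule.linearProjOfIsCompl_apply_left hq ⟨g x, hmem⟩
    have hgs : g (s ⟨g x, hmem⟩) = g x := by
      have := congrArg Subtype.val (LinearMap.congr_fun hs ⟨g x, hmem⟩)
      simpa using this
    have hker : s ⟨g x, hmem⟩ - x ∈ LinearMap.ker g := by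
      rw [LinearMap.mem_ker, map_sub, hgs, sub_self]
    have := h hker
    rw [LinearMap.mem_ker, map_sub, sub_eq_zero] at this
    simp only [hL, LinearMap.comp_apply, hπg]
    exact this
  refine ⟨LinearMap.toMatrix' L, ?_⟩
  apply mulVecLin_inj
  rw [Matrix.mulVecLin_mul]
  refine LinearMap.ext fun x => ?_
  have hXL : (LinearMap.toMatrix' L).mulVecLin = L := by
    rw [← Matrix.toLin'_apply', Matrix.toLin']
    exact LinearMap.toMatrix'.symm_apply_apply L
  simp only [LinearMap.comp_apply, hXL]
  exact (hLg x).symm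

lemma range_le_range_of_herm {A M : Matrix (Fin d) (Fin d) ℂ}
    (hA : A.IsHermitian) (hM : M.IsHermitian)
    (h : LinearMap.ker M.mulVecLin ≤ LinearMap.ker A.mulVecLin) :
    LinearMap.range A.mulVecLin ≤ LinearMap.range M.mulVecLin := by
  obtain ⟨X, hX⟩ := exists_matrix_factor h
  have hA2 : A = M * Xᴴ := by
    conv_lhs => rw [← hA.eq]
    rw [hX, Matrix.conjTranspose_mul, hM.eq]
  rw [hA2, Matrix.mulVecLin_mul]
  exact LinearMap.range_comp_le_range _ _

lemma ker_le_psd_add {A B : Matrix (Fin d) (Fin d) ℂ}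
    (hA : A.PosSemidef) (hB : B.PosSemidef) :
    LinearMap.ker (A + B).mulVecLin ≤ LinearMap.ker A.mulVecLin := by
  intro x hx
  rw [LinearMap.mem_ker, Matrix.mulVecLin_apply] at hx ⊢
  have h0 : star x ⬝ᵥ (A + B) *ᵥ x = 0 := by rw [hx, dotProduct_zero]
  rw [Matrix.add_mulVec, dotProduct_add] at h0
  have ha := hA.dotProduct_mulVec_nonneg x
  have hb := hB.dotProduct_mulVec_nonneg x
  have haz : star x ⬝ᵥ A *ᵥ x = 0 := by
    have h1 : star x ⬝ᵥ A *ᵥ x ≤ 0 := by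
      calc star x ⬝ᵥ A *ᵥ x ≤ star x ⬝ᵥ A *ᵥ x + star x ⬝ᵥ B *ᵥ x :=
        le_add_of_nonneg_right hb
      _ = 0 := h0
    exact le_antisymm h1 ha
  exact (hA.dotProduct_mulVec_zero_iff x).mp haz

lemma range_add_psd {A B : Matrix (Fin d) (Fin d) ℂ}
    (hA : A.PosSemidef) (hB : B.PosSemidef) :
    LinearMap.range (A + B).mulVecLin
      = LinearMap.range A.mulVecLin ⊔ LinearMap.range B.mulVecLin := by
  refine le_antisymm ?_ ?_
  · rintro y ⟨x, rfl⟩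
    rw [Matrix.mulVecLin_add]
    exact Submodule.add_mem_sup (LinearMap.mem_range_self _ x)
      (LinearMap.mem_range_self _ x)
  · refine sup_le ?_ ?_
    · exact range_le_range_of_herm hA.1 (hA.add hB).1 (ker_le_psd_add hA hB)
    · have hcomm : A + B = B + A := add_comm A B
      rw [hcomm]
      exact range_le_range_of_herm hB.1 (hB.add hA).1 (ker_le_psd_add hB hA)

lemma psd_sum {ι : Type*} (s : Finset ι) (f : ι → Matrix (Fin d) (Fin d) ℂ)
    (h : ∀ i ∈ s, (f i).PosSemidef) : (∑ i ∈ s, f i).PosSemidef := by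
  classical
  induction s using Finset.induction_on with
  | empty => simpa using Matrix.PosSemidef.zero
  | insert _ _ hni ih =>
    rename_i a s'
    rw [Finset.sum_insert hni]
    exact (h a (Finset.mem_insert_self a s')).add
      (ih fun i hi => h i (Finset.mem_insert_of_mem hi))

lemma range_sum_psd {ι : Type*} (s : Finset ι) (f : ι → Matrix (Fin d) (Fin d) ℂ)
    (h : ∀ i ∈ s, (f i).PosSemidef) :
    LinearMap.range (∑ i ∈ s, f i).mulVecLin
      = ⨆ i ∈ s, LinearMap.range (f i).mulVecLin := by
  classical
  induction s using Finset.induction_on with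
  | empty => simp [Matrix.mulVecLin_zero]
  | insert _ _ hni ih =>
    rename_i a s'
    rw [Finset.sum_insert hni,
      range_add_psd (h a (Finset.mem_insert_self a s'))
        (psd_sum s' f fun i hi => h i (Finset.mem_insert_of_mem hi)),
      ih fun i hi => h i (Finset.mem_insert_of_mem hi)]
    exact (Finset.iSup_insert a s' fun i => LinearMap.range (f i).mulVecLin).symm

lemma range_conjT_mul_self (B : Matrix (Fin d) (Fin d) ℂ) :
    LinearMap.range (Bᴴ * B).mulVecLin = LinearMap.range Bᴴ.mulVecLin := by
  refine Submodule.eq_of_le_of_finrank_eq ?_ ?_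
  · rintro y ⟨x, rfl⟩
    rw [Matrix.mulVecLin_mul]
    exact LinearMap.mem_range_self _ _
  · show (Bᴴ * B).rank = Bᴴ.rank
    rw [Matrix.rank_conjTranspose_mul_self, Matrix.rank_conjTranspose]

lemma range_sandwich (F : Matrix (Fin d) (Fin d) ℂ) {ρ : Matrix (Fin d) (Fin d) ℂ}
    (hρ : ρ.PosSemidef) :
    LinearMap.range (F * ρ * Fᴴ).mulVecLin
      = (LinearMap.range ρ.mulVecLin).map F.mulVecLin := by
  obtain ⟨B, rfl⟩ := psd_exists_conjT hρ
  have e1 : F * (Bᴴ * B) * Fᴴ = (B * Fᴴ)ᴴ * (B * Fᴴ) := by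
    rw [Matrix.conjTranspose_mul, Matrix.conjTranspose_conjTranspose]
    simp [Matrix.mul_assoc]
  have e2 : (B * Fᴴ)ᴴ = F * Bᴴ := by
    rw [Matrix.conjTranspose_mul, Matrix.conjTranspose_conjTranspose]
  rw [e1, range_conjT_mul_self, e2, Matrix.mulVecLin_mul, LinearMap.range_comp,
    ← range_conjT_mul_self B]

lemma range_superOp {I : Type} [Fintype I] (F : I → Matrix (Fin d) (Fin d) ℂ)
    {ρ : Matrix (Fin d) (Fin d) ℂ} (hρ : ρ.PosSemidef) :
    LinearMap.range (superOp F ρ).mulVecLin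
      = ⨆ i, (LinearMap.range ρ.mulVecLin).map (F i).mulVecLin := by
  rw [superOp, range_sum_psd Finset.univ _
    (fun i _ => hρ.mul_mul_conjTranspose_same (F i))]
  simp only [Finset.mem_univ, iSup_pos, iSup_univ]
  exact iSup_congr fun i => range_sandwich (F i) hρ

lemma range_smul_matrix {c : ℂ} (hc : c ≠ 0) (A : Matrix (Fin d) (Fin d) ℂ) :
    LinearMap.range (c • A).mulVecLin = LinearMap.range A.mulVecLin := by
  have h : (c • A).mulVecLin = c • A.mulVecLin := by
    refine LinearMap.ext fun x => ?_
    simp [Matrix.mulVecLin_apply, Matrix.smul_mulVec]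
  rw [h]
  exact LinearMap.range_smul _ c hc

lemma psd_smul_real {A : Matrix (Fin d) (Fin d) ℂ} (hA : A.PosSemidef)
    {c : ℝ} (hc : 0 ≤ c) : ((c : ℂ) • A).PosSemidef := by
  refine Matrix.posSemidef_iff_dotProduct_mulVec.mpr ⟨?_, ?_⟩
  · show ((c : ℂ) • A)ᴴ = (c : ℂ) • A
    rw [Matrix.conjTranspose_smul, hA.1.eq]
    congr 1
    simp
  · intro x
    rw [Matrix.smul_mulVec, dotProduct_smul, smul_eq_mul]
    exact mul_nonneg (by exact_mod_cast hc) (hA.dotProduct_mulVec_nonneg x)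

lemma range_le_proj_iff {P ρ : Matrix (Fin d) (Fin d) ℂ}
    (hP1 : P.IsHermitian) (hP2 : P * P = P) (hρ : ρ.PosSemidef) :
    LinearMap.range ρ.mulVecLin ≤ LinearMap.range P.mulVecLin
      ↔ ((1 - P) * ρ).trace = 0 := by
  set Q : Matrix (Fin d) (Fin d) ℂ := 1 - P with hQ
  have hQh : Q.IsHermitian := (Matrix.isHermitian_one).sub hP1
  have hQ2 : Q * Q = Q := by
    rw [hQ, Matrix.mul_sub, Matrix.mul_one, Matrix.sub_mul, Matrix.one_mul, hP2,
      sub_self, sub_zero]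
  constructor
  · intro h
    have hPρ : P * ρ = ρ := by
      apply mulVecLin_inj
      refine LinearMap.ext fun x => ?_
      obtain ⟨y, hy⟩ := h (LinearMap.mem_range_self ρ.mulVecLin x)
      simp only [Matrix.mulVecLin_apply] at hy ⊢
      rw [← Matrix.mulVec_mulVec, ← hy, Matrix.mulVec_mulVec, hP2, hy]
    rw [hQ, Matrix.sub_mul, Matrix.one_mul, hPρ, sub_self, Matrix.trace_zero]
  · intro h
    have hQρQ : (Q * ρ * Q).PosSemidef := by
      have := hρ.mul_mul_conjTranspose_same Q
      rwa [hQh.eq] at this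
    have htrQ : (Q * ρ * Q).trace = 0 := by
      rw [Matrix.trace_mul_comm, ← Matrix.mul_assoc, hQ2, h]
    have hzero : Q * ρ * Q = 0 := psd_trace_eq_zero hQρQ htrQ
    obtain ⟨B, hB⟩ := psd_exists_conjT hρ
    have hBQ : B * Q = 0 := by
      have e : (B * Q)ᴴ * (B * Q) = Q * ρ * Q := by
        rw [Matrix.conjTranspose_mul, hQh.eq, hB]
        simp [Matrix.mul_assoc]
      rw [← Matrix.conjTranspose_mul_self_eq_zero (A := B * Q), e, hzero]
    have hQρ : Q * ρ = 0 := by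
      have e2 : Q * ρ = (B * Q)ᴴ * B := by
        rw [Matrix.conjTranspose_mul, hQh.eq, hB, Matrix.mul_assoc]
      rw [e2, hBQ, Matrix.conjTranspose_zero, Matrix.zero_mul]
    have hPρ : P * ρ = ρ := by
      have := hQρ
      rw [hQ, Matrix.sub_mul, Matrix.one_mul, sub_eq_zero] at this
      exact this.symm
    rintro y ⟨x, rfl⟩
    refine ⟨ρ *ᵥ x, ?_⟩
    rw [Matrix.mulVecLin_apply, Matrix.mulVecLin_apply, Matrix.mulVec_mulVec, hPρ]

section SuperOpLemmas
variable {d : ℕ}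

lemma superOp_smul {I : Type} [Fintype I] (F : I → Matrix (Fin d) (Fin d) ℂ)
    (a : ℂ) (ρ : Matrix (Fin d) (Fin d) ℂ) :
    superOp F (a • ρ) = a • superOp F ρ := by
  simp [superOp, Finset.smul_sum, Matrix.mul_smul, Matrix.smul_mul]

lemma superOp_sum {I : Type} [Fintype I] (F : I → Matrix (Fin d) (Fin d) ℂ)
    {ι : Type*} (s : Finset ι) (f : ι → Matrix (Fin d) (Fin d) ℂ) :
    superOp F (∑ i ∈ s, f i) = ∑ i ∈ s, superOp F (f i) := by
  unfold superOp
  have h : ∀ j : I, F j * (∑ i ∈ s, f i) * (F j)ᴴ = ∑ i ∈ s, F j * f i * (F j)ᴴ := by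
    intro j; rw [Finset.mul_sum, Finset.sum_mul]
  rw [Finset.sum_congr rfl fun j _ => h j, Finset.sum_comm]

lemma psd_superOp {I : Type} [Fintype I] (F : I → Matrix (Fin d) (Fin d) ℂ)
    {ρ : Matrix (Fin d) (Fin d) ℂ} (hρ : ρ.PosSemidef) :
    (superOp F ρ).PosSemidef :=
  psd_sum _ _ fun i _ => hρ.mul_mul_conjTranspose_same (F i)

end SuperOpLemmas

end AuxLemmas

/-- For a finite family (|Act| ≥ 2) of trace-preserving super-operators `E_α`
and their uniform average `E`, a projection `P` and a density matrix `σ₀`: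
all states reachable by words over `Act` are supported in `range P` iff
`supp(E^k(σ₀)) ⊆ range P` for all `0 ≤ k ≤ d − 1`. -/
theorem invariance_iff_average_iterates {d : ℕ} {Act : Type} [Fintype Act]
    (hcard : 2 ≤ Fintype.card Act)
    {I : Act → Type} [∀ α, Fintype (I α)]
    (E : (α : Act) → I α → Matrix (Fin d) (Fin d) ℂ)
    (htp : ∀ α, ∑ i, (E α i)ᴴ * E α i = (1 : Matrix (Fin d) (Fin d) ℂ))
    (P : Matrix (Fin d) (Fin d) ℂ) (hP1 : P.IsHermitian) (hP2 : P * P = P)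
    (σ₀ : Matrix (Fin d) (Fin d) ℂ) (hσ₀ : σ₀.PosSemidef) (htr : σ₀.trace = 1) :
    (∀ w : List Act,
        LinearMap.range (w.foldl (fun ρ α => superOp (E α) ρ) σ₀).mulVecLin
          ≤ LinearMap.range P.mulVecLin) ↔
      (∀ k, k ≤ d - 1 →
        LinearMap.range
            ((fun ρ => (Fintype.card Act : ℂ)⁻¹ • ∑ α, superOp (E α) ρ)^[k] σ₀).mulVecLin
          ≤ LinearMap.range P.mulVecLin) := by
  classical
  have hd : 0 < d := by
    rcases Nat.eq_zero_or_pos d with rfl | h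
    · rw [Matrix.trace_eq_zero_of_isEmpty] at htr
      exact absurd htr.symm one_ne_zero
    · exact h
  set c : ℂ := (Fintype.card Act : ℂ)⁻¹ with hc
  have hN : (Fintype.card Act : ℂ) ≠ 0 := Nat.cast_ne_zero.mpr (by omega)
  have hcne : c ≠ 0 := inv_ne_zero hN
  set step : Matrix (Fin d) (Fin d) ℂ → Act → Matrix (Fin d) (Fin d) ℂ :=
    fun ρ α => superOp (E α) ρ with hstep
  set A : Matrix (Fin d) (Fin d) ℂ → Matrix (Fin d) (Fin d) ℂ :=
    fun ρ => c • ∑ α, superOp (E α) ρ with hA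
  -- basic positivity facts
  have A_psd : ∀ {ρ : Matrix (Fin d) (Fin d) ℂ}, ρ.PosSemidef → (A ρ).PosSemidef := by
    intro ρ h
    have hcr : c = ((((Fintype.card Act : ℝ))⁻¹ : ℝ) : ℂ) := by
      rw [hc]; push_cast; ring
    rw [hA]
    simp only
    rw [hcr]
    exact psd_smul_real (psd_sum _ _ fun α _ => psd_superOp (E α) h)
      (by positivity)
  have iter_psd : ∀ k, (A^[k] σ₀).PosSemidef := by
    intro k
    induction k with
    | zero => simpa using hσ₀
    | succ k ih => rw [Function.iterate_succ_apply']; exact A_psd ih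
  have word_psd : ∀ (w : List Act) {ρ : Matrix (Fin d) (Fin d) ℂ}, ρ.PosSemidef →
      (w.foldl step ρ).PosSemidef := by
    intro w
    induction w with
    | nil => intro ρ h; simpa using h
    | cons a w ih =>
      intro ρ h
      rw [List.foldl_cons]
      exact ih (psd_superOp (E a) h)
  -- linearity of the word action
  have foldl_smul : ∀ (w : List Act) (a : ℂ) (ρ : Matrix (Fin d) (Fin d) ℂ),
      w.foldl step (a • ρ) = a • w.foldl step ρ := by
    intro w
    induction w with
    | nil => intro a ρ; simp
    | cons b w ih =>
      intro a ρ
      rw [List.foldl_cons, List.foldl_cons]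
      have : step (a • ρ) b = a • step ρ b := superOp_smul (E b) a ρ
      rw [this, ih]
  have foldl_sum : ∀ (w : List Act) {ι : Type} (s : Finset ι)
      (f : ι → Matrix (Fin d) (Fin d) ℂ),
      w.foldl step (∑ i ∈ s, f i) = ∑ i ∈ s, w.foldl step (f i) := by
    intro w
    induction w with
    | nil => intro ι s f; simp
    | cons b w ih =>
      intro ι s f
      rw [List.foldl_cons]
      have : step (∑ i ∈ s, f i) b = ∑ i ∈ s, step (f i) b := superOp_sum (E b) s f
      rw [this, ih]
      exact Finset.sum_congr rfl fun i _ => by rw [List.foldl_cons]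
  -- expansion of the iterates of the average into words
  have expand : ∀ (k : ℕ) (ρ : Matrix (Fin d) (Fin d) ℂ),
      A^[k] ρ = c ^ k • ∑ v : Fin k → Act, (List.ofFn v).foldl step ρ := by
    intro k
    induction k with
    | zero =>
      intro ρ
      rw [Function.iterate_zero_apply, pow_zero, one_smul, Fintype.sum_unique]
      simp
    | succ k ih =>
      intro ρ
      rw [Function.iterate_succ_apply, ih (A ρ)]
      have h1 : ∀ v : Fin k → Act, (List.ofFn v).foldl step (A ρ)
          = c • ∑ α, (List.ofFn (Fin.cons α v : Fin (k+1) → Act)).foldl step ρ := by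
        intro v
        rw [hA]
        simp only
        rw [foldl_smul, foldl_sum]
        congr 1
        refine Finset.sum_congr rfl fun α _ => ?_
        have hofn : (List.ofFn (Fin.cons α v : Fin (k+1) → Act))
            = α :: List.ofFn v := by
          rw [List.ofFn_succ]
          simp
        rw [hofn, List.foldl_cons]
      rw [Finset.sum_congr rfl fun v _ => h1 v]
      rw [← Finset.smul_sum]
      rw [smul_smul, ← pow_succ]
      congr 1
      rw [← Fintype.sum_prod_type']
      exact Fintype.sum_equiv
        ((Equiv.prodComm (Fin k → Act) Act).trans (Fin.consEquiv fun _ => Act))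
        (fun q => (List.ofFn (Fin.cons q.2 q.1 : Fin (k+1) → Act)).foldl step ρ)
        (fun p => (List.ofFn p).foldl step ρ)
        (fun q => rfl)
  -- the defect projection
  set Qm : Matrix (Fin d) (Fin d) ℂ := 1 - P with hQm
  have hQh : Qm.IsHermitian := (Matrix.isHermitian_one).sub hP1
  have hQ2 : Qm * Qm = Qm := by
    rw [hQm, Matrix.mul_sub, Matrix.mul_one, Matrix.sub_mul, Matrix.one_mul, hP2,
      sub_self, sub_zero]
  have hQpsd : Qm.PosSemidef := by
    have h1 : (Qmᴴ * Qm).PosSemidef := Matrix.posSemidef_conjTranspose_mul_self Qm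
    rwa [hQh.eq, hQ2] at h1
  -- splitting of the trace condition over words
  have Tsplit : ∀ k : ℕ, ((1 - P) * (A^[k] σ₀)).trace = 0 ↔
      ∀ v : Fin k → Act, ((1 - P) * ((List.ofFn v).foldl step σ₀)).trace = 0 := by
    intro k
    rw [expand k σ₀]
    have h1 : Qm * (c ^ k • ∑ v : Fin k → Act, (List.ofFn v).foldl step σ₀)
        = c ^ k • ∑ v : Fin k → Act, Qm * ((List.ofFn v).foldl step σ₀) := by
      rw [Matrix.mul_smul, Finset.mul_sum]
    rw [← hQm, h1, Matrix.trace_smul, smul_eq_mul, mul_eq_zero]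
    have hck : c ^ k ≠ 0 := pow_ne_zero k hcne
    rw [or_iff_right hck, Matrix.trace_sum]
    rw [Finset.sum_eq_zero_iff_of_nonneg
      (fun v _ => trace_mul_psd_nonneg hQpsd (word_psd _ hσ₀))]
    constructor
    · intro h v; exact h v (Finset.mem_univ v)
    · intro h v _; exact h v
  -- the increasing chain of supports
  set S : ℕ → Matrix (Fin d) (Fin d) ℂ :=
    fun k => ∑ j ∈ Finset.range (k+1), A^[j] σ₀ with hS
  set V : ℕ → Submodule ℂ (Fin d → ℂ) :=
    fun k => LinearMap.range (S k).mulVecLin with hV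
  have hSpsd : ∀ k, (S k).PosSemidef := fun k => psd_sum _ _ fun j _ => iter_psd j
  have hmono1 : ∀ k, V k ≤ V (k+1) := by
    intro k
    simp only [hV, hS]
    rw [Finset.sum_range_succ (f := fun j => A^[j] σ₀) (n := k+1),
      range_add_psd (by simpa [hS] using hSpsd k) (iter_psd (k+1))]
    exact le_sup_left
  have Vmono : Monotone V := monotone_nat_of_le_succ hmono1
  have hmem : ∀ k, LinearMap.range (A^[k] σ₀).mulVecLin ≤ V k := by
    intro k
    simp only [hV, hS]
    rw [range_sum_psd _ _ fun j _ => iter_psd j]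
    exact le_iSup₂_of_le k (Finset.mem_range.mpr (by omega)) le_rfl
  -- the support of the average is a monotone function of the support
  have A_sum : ∀ {ι : Type} (s : Finset ι) (f : ι → Matrix (Fin d) (Fin d) ℂ),
      A (∑ i ∈ s, f i) = ∑ i ∈ s, A (f i) := by
    intro ι s f
    rw [hA]
    simp only
    rw [Finset.sum_congr rfl fun α (_ : α ∈ Finset.univ) => superOp_sum (E α) s f,
      Finset.sum_comm, ← Finset.smul_sum]
  have hAvgRange : ∀ {ρ : Matrix (Fin d) (Fin d) ℂ}, ρ.PosSemidef →
      LinearMap.range (A ρ).mulVecLin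
        = ⨆ p : Σ α, I α, (LinearMap.range ρ.mulVecLin).map (E p.1 p.2).mulVecLin := by
    intro ρ hρ
    have h1 : A ρ = c • superOp (fun p : Σ α, I α => E p.1 p.2) ρ := by
      rw [hA]
      simp only
      congr 1
      rw [superOp, ← Finset.univ_sigma_univ, Finset.sum_sigma]
      exact Finset.sum_congr rfl fun α _ => by rw [superOp]
    rw [h1, range_smul_matrix hcne, range_superOp _ hρ]
  have hstep2 : ∀ k, V (k+1) = LinearMap.range σ₀.mulVecLin ⊔
      ⨆ p : Σ α, I α, (V k).map (E p.1 p.2).mulVecLin := by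
    intro k
    have hsum : S (k+1) = A (S k) + σ₀ := by
      simp only [hS]
      rw [Finset.sum_range_succ' (f := fun j => A^[j] σ₀) (n := k+1)]
      congr 1
      · rw [A_sum]
        exact Finset.sum_congr rfl fun i _ => Function.iterate_succ_apply' A i σ₀
    simp only [hV]
    rw [hsum, range_add_psd (A_psd (hSpsd k)) hσ₀, hAvgRange (hSpsd k), sup_comm]
  have hstab : ∀ k, V k = V (k+1) → ∀ m, V (k+m) = V k := by
    intro k hk m
    induction m with
    | zero => rfl
    | succ m ih =>
      rw [show k + (m+1) = (k+m)+1 from rfl, hstep2 (k+m), ih, ← hstep2 k, ← hk]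
  have hfin : ∃ k, k ≤ d - 1 ∧ V k = V (k+1) := by
    by_contra hcon
    push_neg at hcon
    have grow : ∀ k, k ≤ d → k + 1 ≤ Module.finrank ℂ (V k) := by
      intro k
      induction k with
      | zero =>
        intro _
        have hne : σ₀ ≠ 0 := by
          intro h0; rw [h0, Matrix.trace_zero] at htr; exact one_ne_zero htr.symm
        have hV0 : V 0 = LinearMap.range σ₀.mulVecLin := by
          simp only [hV, hS]
          rw [Finset.sum_range_one, Function.iterate_zero_apply]
        have hbot : LinearMap.range σ₀.mulVecLin ≠ ⊥ := by
          intro hb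
          apply hne
          apply mulVecLin_inj (B := 0)
          rw [Matrix.mulVecLin_zero]
          exact LinearMap.range_eq_bot.mp hb
        rw [hV0]
        rw [Nat.one_le_iff_ne_zero]
        intro h0
        exact hbot (Submodule.finrank_eq_zero.mp h0)
      | succ k ih =>
        intro hk
        have h1 := ih (by omega)
        have hne := hcon k (by omega)
        have hlt : V k < V (k+1) := lt_of_le_of_ne (hmono1 k) hne
        have h2 := Submodule.finrank_lt_finrank_of_lt hlt
        omega
    have h2 := grow d le_rfl
    have h3 : Module.finrank ℂ (V d) ≤ Module.finrank ℂ (Fin d → ℂ) :=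
      Submodule.finrank_le _
    rw [Module.finrank_pi, Fintype.card_fin] at h3
    omega
  obtain ⟨k₀, hk₀le, hk₀⟩ := hfin
  have hVle : ∀ m, V m ≤ V (d-1) := by
    intro m
    rcases le_or_gt m (d-1) with h | h
    · exact Vmono h
    · have hm : m = k₀ + (m - k₀) := by omega
      rw [hm, hstab k₀ hk₀ (m - k₀)]
      exact Vmono hk₀le
  -- putting everything together
  constructor
  · intro hL k _
    rw [range_le_proj_iff hP1 hP2 (iter_psd k)]
    refine (Tsplit k).mpr fun v => ?_
    exact (range_le_proj_iff hP1 hP2 (word_psd _ hσ₀)).mp (hL (List.ofFn v))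
  · intro hR w
    rw [range_le_proj_iff hP1 hP2 (word_psd w hσ₀)]
    have hall : ∀ m, LinearMap.range (A^[m] σ₀).mulVecLin
        ≤ LinearMap.range P.mulVecLin := by
      intro m
      have h1 : V (d-1) ≤ LinearMap.range P.mulVecLin := by
        simp only [hV, hS]
        rw [range_sum_psd _ _ fun j _ => iter_psd j]
        refine iSup₂_le fun j hj => ?_
        exact hR j (by have := Finset.mem_range.mp hj; omega)
      exact le_trans (le_trans (hmem m) (hVle m)) h1
    have hT := (range_le_proj_iff hP1 hP2 (iter_psd w.length)).mp (hall w.length)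
    have hv := (Tsplit w.length).mp hT (fun i => w.get i)
    rwa [List.ofFn_get] at hv
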